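/- arXiv:2106.11955 — 2 statements merged into one kernel-verified Lean document; each statement's English description precedes it below -/
import Mathlib

section
/- Let g be a semisimple (finite-dimensional real) Lie algebra with decomposition g = s_1 ⊕ ... ⊕ s_r into simple ideals, and let h ≤ g be a proper Lie subalgebra that surjects onto every simple factor s_i under the canonical projections. Then there exist indices j ≠ k such that the projection of h onto s_j ⊕ s_k is the graph of a Lie algebra isomorphism s_j ≅ s_k. -/
open DirectSum

section Aux

variable {r : ℕ} {s : Fin r → Type*}
    [∀ i, LieRing (s i)] [∀ i, LieAlgebra ℝ (s i)]

/-- The "vanishing-on-`S`" ideal of `s j` induced by `h`. -/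
def projIdeal (h : LieSubalgebra ℝ (⨁ i, s i))
    (hsurj : ∀ i, ∀ y : s i, ∃ x ∈ h, x i = y)
    (j : Fin r) (S : Set (Fin r)) : LieIdeal ℝ (s j) where
  carrier := {y | ∃ x ∈ h, x j = y ∧ ∀ k ∈ S, x k = 0}
  add_mem' := by
    rintro a b ⟨x, hx, rfl, hxS⟩ ⟨y, hy, rfl, hyS⟩
    exact ⟨x + y, add_mem hx hy, (DirectSum.add_apply x y j),
      fun k hk => by rw [DirectSum.add_apply, hxS k hk, hyS k hk, add_zero]⟩
  zero_mem' := ⟨0, zero_mem h, rfl, fun _ _ => rfl⟩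
  smul_mem' := by
    rintro c a ⟨x, hx, rfl, hxS⟩
    exact ⟨c • x, h.smul_mem c hx, DirectSum.smul_apply c x j,
      fun k hk => by rw [DirectSum.smul_apply, hxS k hk, smul_zero]⟩
  lie_mem := by
    rintro z a ⟨x, hx, rfl, hxS⟩
    obtain ⟨w, hw, hwj⟩ := hsurj j z
    exact ⟨⁅w, x⁆, h.lie_mem hw hx, by rw [DirectSum.bracket_apply, hwj],
      fun k hk => by rw [DirectSum.bracket_apply, hxS k hk, lie_zero]⟩

theorem mem_projIdeal {h : LieSubalgebra ℝ (⨁ i, s i)}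
    {hsurj : ∀ i, ∀ y : s i, ∃ x ∈ h, x i = y} {j : Fin r} {S : Set (Fin r)} {y : s j} :
    y ∈ projIdeal h hsurj j S ↔ ∃ x ∈ h, x j = y ∧ ∀ k ∈ S, x k = 0 := ⟨fun hy => hy, fun hy => hy⟩

theorem top_lie_top (R L : Type*) [CommRing R] [LieRing L] [LieAlgebra R L]
    [LieAlgebra.IsSimple R L] :
    ⁅(⊤ : LieIdeal R L), (⊤ : LieIdeal R L)⁆ = ⊤ := by
  rcases LieAlgebra.IsSimple.eq_bot_or_eq_top ⁅(⊤ : LieIdeal R L), (⊤ : LieIdeal R L)⁆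
    with hb | ht
  · exfalso
    apply LieAlgebra.IsSimple.non_abelian (R := R) (L := L)
    constructor
    intro a b
    have := LieSubmodule.lie_mem_lie (I := (⊤ : LieIdeal R L)) (N := (⊤ : LieIdeal R L))
      (LieSubmodule.mem_top a) (LieSubmodule.mem_top b)
    rwa [hb, LieSubmodule.mem_bot] at this
  · exact ht

end Aux

/-- If `h` is a proper Lie subalgebra of a finite-dimensional real
semisimple Lie algebra `g = s₁ ⊕ ⋯ ⊕ s_r` (decomposition into simple ideals) which
surjects onto every simple factor, then there are indices `j ≠ k` such that the
projection of `h` onto `s_j ⊕ s_k` is the graph of a Lie algebra isomorphism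
`s_j ≅ s_k`. -/
theorem surjects_onto_every_factor_implies_graph
    (r : ℕ) (s : Fin r → Type*)
    [∀ i, LieRing (s i)] [∀ i, LieAlgebra ℝ (s i)]
    [∀ i, FiniteDimensional ℝ (s i)] [∀ i, LieAlgebra.IsSimple ℝ (s i)]
    (h : LieSubalgebra ℝ (⨁ i, s i)) (hprop : h ≠ ⊤)
    (hsurj : ∀ i, ∀ y : s i, ∃ x ∈ h, x i = y) :
    ∃ j k, j ≠ k ∧ ∃ e : s j ≃ₗ⁅ℝ⁆ s k,
      ∀ p : s j × s k, (∃ x ∈ h, x j = p.1 ∧ x k = p.2) ↔ e p.1 = p.2 := by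
  classical
  -- Step 1: some factor meets `h` trivially
  have step1 : ∃ j, projIdeal h hsurj j {k | k ≠ j} ≠ ⊤ := by
    by_contra hc
    push_neg at hc
    apply hprop
    rw [eq_top_iff]
    intro x hxt
    clear hxt
    induction x using DirectSum.induction_on with
    | zero => exact zero_mem h
    | of i y =>
      have hy : y ∈ projIdeal h hsurj i {k | k ≠ i} := (hc i) ▸ LieSubmodule.mem_top y
      obtain ⟨x, hx, hxi, hxo⟩ := hy
      have hxeq : x = DirectSum.of s i y := by
        refine DFinsupp.ext fun l => ?_
        by_cases hl : l = i
        · subst hl; rw [DirectSum.of_eq_same, hxi]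
        · rw [DirectSum.of_eq_of_ne _ _ _ hl, hxo l hl]
      exact hxeq ▸ hx
    | add x y hx hy => exact add_mem hx hy
  obtain ⟨j, hj⟩ := step1
  -- Step 2: find k ≠ j with trivial pairwise kernel ideal on the j side
  have step2 : ∃ k, k ≠ j ∧ projIdeal h hsurj j {k} = ⊥ := by
    by_contra hc
    push_neg at hc
    have htop : ∀ k, k ≠ j → projIdeal h hsurj j {k} = ⊤ := fun k hk =>
      (LieAlgebra.IsSimple.eq_bot_or_eq_top _).resolve_left (hc k hk)
    have key : ∀ S : Finset (Fin r), j ∉ S → projIdeal h hsurj j ↑S = ⊤ := by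
      intro S
      induction S using Finset.induction_on with
      | empty =>
        intro _
        rw [eq_top_iff]
        rintro y -
        obtain ⟨x, hx, hxj⟩ := hsurj j y
        exact ⟨x, hx, hxj, fun i hi => absurd hi (by simp)⟩
      | @insert k S hkS ih =>
        intro hjnot
        have hkj : k ≠ j := fun e => hjnot (by simp [e])
        have hjS : j ∉ S := fun e => hjnot (Finset.mem_insert_of_mem e)
        rw [eq_top_iff]
        rintro y -
        have hy : y ∈ ⁅projIdeal h hsurj j {k}, projIdeal h hsurj j ↑S⁆ := by
          rw [htop k hkj, ih hjS, top_lie_top]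
          exact LieSubmodule.mem_top y
        rw [← LieSubmodule.mem_toSubmodule, LieSubmodule.lieIdeal_oper_eq_linear_span'] at hy
        refine Submodule.span_induction ?_ (zero_mem _) (fun a b _ _ ha hb => add_mem ha hb)
          (fun c a _ ha => Submodule.smul_mem _ c ha) hy
        rintro m ⟨a, ha, b, hb, rfl⟩
        obtain ⟨x, hx, hxj, hxk⟩ := ha
        obtain ⟨x', hx', hx'j, hx'S⟩ := hb
        refine ⟨⁅x, x'⁆, h.lie_mem hx hx', by rw [DirectSum.bracket_apply, hxj, hx'j], ?_⟩
        intro i hi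
        rw [Finset.coe_insert] at hi
        rcases hi with hi | hi
        · subst hi
          rw [DirectSum.bracket_apply, hxk i rfl, zero_lie]
        · rw [DirectSum.bracket_apply, hx'S i hi, lie_zero]
    have hfin := key (Finset.univ.erase j) (Finset.notMem_erase j _)
    apply hj
    have hset : (↑(Finset.univ.erase j) : Set (Fin r)) = {k | k ≠ j} := by
      ext i; simp
    rwa [hset] at hfin
  obtain ⟨k, hkj, hbot⟩ := step2
  -- Step 3: the symmetric ideal on the k side is also trivial
  have hCbot : projIdeal h hsurj k {j} = ⊥ := by
    rcases LieAlgebra.IsSimple.eq_bot_or_eq_top (projIdeal h hsurj k {j}) with hC | hC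
    · exact hC
    exfalso
    have htot : projIdeal h hsurj j {k} = ⊤ := by
      rw [eq_top_iff]
      rintro y -
      obtain ⟨x, hx, hxj⟩ := hsurj j y
      obtain ⟨x', hx', hx'k, hx'j⟩ :=
        (show x k ∈ projIdeal h hsurj k {j} from hC ▸ LieSubmodule.mem_top _)
      refine ⟨x - x', sub_mem hx hx', ?_, ?_⟩
      · rw [DirectSum.sub_apply, hxj, hx'j j rfl, sub_zero]
      · intro i hi
        rcases hi with rfl
        rw [DirectSum.sub_apply, hx'k, sub_self]
    have hzero : ∀ y : s j, y = 0 := by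
      intro y
      have : y ∈ projIdeal h hsurj j {k} := htot ▸ LieSubmodule.mem_top y
      rwa [hbot, LieSubmodule.mem_bot] at this
    exact LieAlgebra.IsSimple.non_abelian (R := ℝ) (L := s j)
      ⟨fun a b => by rw [hzero a, zero_lie]⟩
  -- Step 4: build the isomorphism
  have hker : ∀ x ∈ h, x j = 0 → x k = 0 := by
    intro x hx hxj
    have : x k ∈ projIdeal h hsurj k {j} :=
      ⟨x, hx, rfl, fun i hi => by rcases hi with rfl; exact hxj⟩
    rwa [hCbot, LieSubmodule.mem_bot] at this
  have U : ∀ x ∈ h, ∀ x' ∈ h, x j = x' j → x k = x' k := by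
    intro x hx x' hx' hjj
    have hsub := hker (x - x') (sub_mem hx hx')
      (by rw [DirectSum.sub_apply, hjj, sub_self])
    rw [DirectSum.sub_apply] at hsub
    exact sub_eq_zero.mp hsub
  choose F hF1 hF2 using hsurj j
  have Ukey : ∀ (a : s j), ∀ x ∈ h, x j = a → x k = F a k := fun a x hx hxa =>
    U x hx (F a) (hF1 a) (by rw [hxa, hF2])
  let f : s j →ₗ⁅ℝ⁆ s k :=
    { toFun := fun a => F a k
      map_add' := fun a b => by
        have := Ukey (a + b) (F a + F b) (add_mem (hF1 a) (hF1 b))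
          (by rw [DirectSum.add_apply, hF2, hF2])
        rw [DirectSum.add_apply] at this
        exact this.symm
      map_smul' := fun c a => by
        have := Ukey (c • a) (c • F a) (h.smul_mem c (hF1 a))
          (by rw [DirectSum.smul_apply, hF2])
        rw [DirectSum.smul_apply] at this
        exact this.symm
      map_lie' := fun {a b} => by
        have := Ukey ⁅a, b⁆ ⁅F a, F b⁆ (h.lie_mem (hF1 a) (hF1 b))
          (by rw [DirectSum.bracket_apply, hF2, hF2])
        rw [DirectSum.bracket_apply] at this
        exact this.symm }
  have hfzero : ∀ a : s j, f a = 0 → a = 0 := by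
    intro a h0
    have : a ∈ projIdeal h hsurj j {k} :=
      ⟨F a, hF1 a, hF2 a, fun i hi => by rcases hi with rfl; exact h0⟩
    rwa [hbot, LieSubmodule.mem_bot] at this
  have hbij : Function.Bijective f := by
    constructor
    · intro a b hab
      have : f (a - b) = 0 := by rw [map_sub, hab, sub_self]
      exact sub_eq_zero.mp (hfzero _ this)
    · intro b
      obtain ⟨x, hx, hxk⟩ := hsurj k b
      exact ⟨x j, by rw [show f (x j) = F (x j) k from rfl, ← Ukey (x j) x hx rfl]; exact hxk⟩
  refine ⟨j, k, hkj.symm, LieEquiv.ofBijective f hbij, ?_⟩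
  intro p
  constructor
  · rintro ⟨x, hx, hxj, hxk⟩
    show f p.1 = p.2
    rw [show f p.1 = F p.1 k from rfl, ← Ukey p.1 x hx hxj]
    exact hxk
  · intro hep
    exact ⟨F p.1, hF1 p.1, hF2 p.1, hep⟩
end

section
/- Let g be a finite-dimensional semisimple Lie algebra over a field of characteristic zero, written as a direct sum of homogeneous components c_1, ..., c_m (each c_ℓ a sum of mutually isomorphic simple ideals, with no simple summand shared between distinct c_ℓ). If a Lie subalgebra h ≤ g surjects onto each c_ℓ, then h = g. -/
open DirectSum



section Aux
variable {K : Type*} [Field K]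

theorem simple_set_dichotomy {S : Type*} [LieRing S] [LieAlgebra K S]
    [LieAlgebra.IsSimple K S] (C : Set S) (h0 : (0:S) ∈ C)
    (hadd : ∀ x ∈ C, ∀ y ∈ C, x + y ∈ C)
    (hsmul : ∀ (c : K), ∀ x ∈ C, c • x ∈ C)
    (hlie : ∀ (x : S), ∀ y ∈ C, ⁅x, y⁆ ∈ C) :
    (∀ y ∈ C, y = 0) ∨ ∀ t : S, t ∈ C := by
  let J : LieIdeal K S :=
    { carrier := C
      add_mem' := fun hx hy => hadd _ hx _ hy
      zero_mem' := h0
      smul_mem' := fun c x hx => hsmul c x hx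
      lie_mem := fun {x y} hy => hlie x y hy }
  have hJ : ∀ y : S, y ∈ J ↔ y ∈ C := fun y => Iff.rfl
  rcases LieAlgebra.IsSimple.eq_bot_or_eq_top J with hb | ht
  · left
    intro y hy
    exact (LieSubmodule.eq_bot_iff J).mp hb y ((hJ y).mpr hy)
  · right
    intro t
    exact (hJ t).mp (ht ▸ LieSubmodule.mem_top t : t ∈ J)

theorem simple_exists_lie_ne_zero (S : Type*) [LieRing S] [LieAlgebra K S]
    [LieAlgebra.IsSimple K S] : ∃ a b : S, ⁅a, b⁆ ≠ 0 := by
  by_contra hcon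
  push_neg at hcon
  exact LieAlgebra.IsSimple.non_abelian (R := K) (L := S) ⟨fun x y => hcon x y⟩

/-- Goursat-type lemma: two surjections from the same Lie algebra onto simple Lie
algebras, one kernel contained in the other, yields an isomorphism. -/
theorem simple_iso_of_ker_le {L S S' : Type*}
    [LieRing L] [LieAlgebra K L] [LieRing S] [LieAlgebra K S]
    [LieRing S'] [LieAlgebra K S']
    [LieAlgebra.IsSimple K S] [LieAlgebra.IsSimple K S']
    (f : L →ₗ⁅K⁆ S) (f' : L →ₗ⁅K⁆ S')
    (hf : Function.Surjective f) (hf' : Function.Surjective f')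
    (hker : ∀ x : L, f' x = 0 → f x = 0) :
    Nonempty (S' ≃ₗ⁅K⁆ S) := by
  classical
  have heq : ∀ x y : L, f' x = f' y → f x = f y := by
    intro x y hxy
    have : f (x - y) = 0 := hker _ (by rw [map_sub, hxy, sub_self])
    rw [map_sub, sub_eq_zero] at this
    exact this
  let σ : S' → L := Function.surjInv hf'
  have hσ : ∀ u : S', f' (σ u) = u := fun u => Function.surjInv_eq hf' u
  let φ : S' →ₗ⁅K⁆ S :=
    { toFun := fun u => f (σ u)
      map_add' := by
        intro a b
        have h1 : f' (σ (a + b)) = f' (σ a + σ b) := by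
          rw [hσ, map_add, hσ, hσ]
        show f (σ (a + b)) = f (σ a) + f (σ b)
        rw [heq _ _ h1, map_add]
      map_smul' := by
        intro c a
        have h1 : f' (σ (c • a)) = f' (c • σ a) := by
          rw [hσ, map_smul, hσ]
        show f (σ (c • a)) = (RingHom.id K) c • f (σ a)
        rw [heq _ _ h1, map_smul]
        rfl
      map_lie' := by
        intro a b
        have h1 : f' (σ ⁅a, b⁆) = f' ⁅σ a, σ b⁆ := by
          rw [hσ, LieHom.map_lie, hσ, hσ]
        show f (σ ⁅a, b⁆) = ⁅f (σ a), f (σ b)⁆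
        rw [heq _ _ h1, LieHom.map_lie] }
  have hφ : ∀ x : L, φ (f' x) = f x := by
    intro x
    exact heq _ _ (hσ (f' x))
  have hφsurj : Function.Surjective φ := by
    intro t
    obtain ⟨x, rfl⟩ := hf t
    exact ⟨f' x, hφ x⟩
  have hφinj : Function.Injective φ := by
    have := simple_set_dichotomy (K := K) {u : S' | φ u = 0}
      (show φ 0 = 0 from map_zero φ) (by intro x hx y hy; simp only [Set.mem_setOf_eq] at *; rw [map_add, hx, hy, add_zero])
      (by intro c x hx; simp only [Set.mem_setOf_eq] at *; rw [map_smul, hx, smul_zero])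
      (by intro x y hy; simp only [Set.mem_setOf_eq] at *; rw [LieHom.map_lie, hy, lie_zero])
    rcases this with hbot | htop
    · intro a b hab
      have : φ (a - b) = 0 := by rw [map_sub, hab, sub_self]
      have := hbot _ this
      rwa [sub_eq_zero] at this
    · exfalso
      obtain ⟨a, b, hab⟩ := simple_exists_lie_ne_zero (K := K) S
      obtain ⟨u, hu⟩ := hφsurj ⁅a, b⁆
      exact hab (hu ▸ htop u)
  exact ⟨LieEquiv.ofBijective φ ⟨hφinj, hφsurj⟩⟩

end Aux

theorem aux_step {K : Type*} [Field K] {L S S' : Type*}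
    [LieRing L] [LieAlgebra K L] [LieRing S] [LieAlgebra K S]
    [LieRing S'] [LieAlgebra K S']
    [LieAlgebra.IsSimple K S] [LieAlgebra.IsSimple K S']
    (f : L →ₗ⁅K⁆ S) (f' : L →ₗ⁅K⁆ S')
    (hf : Function.Surjective f) (hf' : Function.Surjective f')
    (A : LieIdeal K L) (hfA : ∀ t : S, ∃ a ∈ A, f a = t)
    (hiso : IsEmpty (S' ≃ₗ⁅K⁆ S)) :
    ∀ t : S, ∃ x ∈ A, f x = t ∧ f' x = 0 := by
  rcases simple_set_dichotomy (K := K) {u : S' | ∃ a ∈ A, f' a = u}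
    ⟨0, A.zero_mem, f'.map_zero⟩
    (fun x ⟨a, ha, hfa⟩ y ⟨b, hb, hfb⟩ =>
      ⟨a + b, A.add_mem ha hb, by rw [map_add f', hfa, hfb]⟩)
    (fun c x ⟨a, ha, hfa⟩ => ⟨c • a, A.smul_mem c ha, by rw [map_smul f', hfa]⟩)
    (fun x y ⟨a, ha, hfa⟩ => by
      obtain ⟨z, hz⟩ := hf' x
      exact ⟨⁅z, a⁆, A.lie_mem ha, by rw [f'.map_lie, hz, hfa]⟩) with hbot | hs'
  · intro t
    obtain ⟨a, ha, hfa⟩ := hfA t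
    exact ⟨a, ha, hfa, hbot _ ⟨a, ha, rfl⟩⟩
  · rcases simple_set_dichotomy (K := K) {t : S | ∃ a ∈ A, f' a = 0 ∧ f a = t}
      ⟨0, A.zero_mem, f'.map_zero, f.map_zero⟩
      (fun x ⟨a, ha, ha0, hfa⟩ y ⟨b, hb, hb0, hfb⟩ =>
        ⟨a + b, A.add_mem ha hb, by rw [map_add f', ha0, hb0, add_zero],
          by rw [map_add f, hfa, hfb]⟩)
      (fun c x ⟨a, ha, ha0, hfa⟩ =>
        ⟨c • a, A.smul_mem c ha, by rw [map_smul f', ha0, smul_zero],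
          by rw [map_smul f, hfa]⟩)
      (fun x y ⟨a, ha, ha0, hfa⟩ => by
        obtain ⟨z, hz⟩ := hf x
        exact ⟨⁅z, a⁆, A.lie_mem ha, by rw [f'.map_lie, ha0, lie_zero],
          by rw [f.map_lie, hz, hfa]⟩) with hbot2 | hs
    · exfalso
      have hker : ∀ x : ↥A, (f'.comp A.incl) x = 0 → (f.comp A.incl) x = 0 := by
        intro x hx
        exact hbot2 _ ⟨↑x, x.2, hx, rfl⟩
      have hfsurj : Function.Surjective (f.comp A.incl) := by
        intro t
        obtain ⟨a, ha, hfa⟩ := hfA t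
        exact ⟨⟨a, ha⟩, hfa⟩
      have hf'surj : Function.Surjective (f'.comp A.incl) := by
        intro u
        obtain ⟨a, ha, hfa⟩ := hs' u
        exact ⟨⟨a, ha⟩, hfa⟩
      exact (simple_iso_of_ker_le (f.comp A.incl) (f'.comp A.incl)
        hfsurj hf'surj hker).elim hiso.false
    · intro t
      obtain ⟨a, ha, ha0, hfa⟩ := hs t
      exact ⟨a, ha, hfa, ha0⟩

/-- Let `g` be a finite-dimensional semisimple Lie algebra over a field of
characteristic zero, written as the direct sum of homogeneous components
`c ℓ = (s ℓ)^{⊕ n ℓ}` (each a sum of mutually isomorphic simple ideals, no simple summand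
shared between distinct homogeneous components, i.e. `s ℓ ≇ s ℓ'` for `ℓ ≠ ℓ'`).
If a Lie subalgebra `h ≤ g` surjects onto each homogeneous component, then `h = g`. -/
theorem eq_top_of_surjects_onto_homogeneous_components
    (K : Type*) [Field K] [CharZero K]
    (m : ℕ) (s : Fin m → Type*)
    [∀ ℓ, LieRing (s ℓ)] [∀ ℓ, LieAlgebra K (s ℓ)]
    [∀ ℓ, FiniteDimensional K (s ℓ)] [∀ ℓ, LieAlgebra.IsSimple K (s ℓ)]
    (n : Fin m → ℕ)
    (hdistinct : ∀ ℓ ℓ', ℓ ≠ ℓ' → IsEmpty (s ℓ ≃ₗ⁅K⁆ s ℓ'))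
    (h : LieSubalgebra K (⨁ ℓ, (⨁ _j : Fin (n ℓ), s ℓ)))
    (hsurj : ∀ ℓ, ∀ y : ⨁ _j : Fin (n ℓ), s ℓ, ∃ x ∈ h, x ℓ = y) :
    h = ⊤ := by
  classical
  -- the coordinate projections of `h`, as morphisms of Lie algebras
  let χ : ∀ (ℓ : Fin m), Fin (n ℓ) → (↥h →ₗ⁅K⁆ s ℓ) := fun ℓ j =>
    (DirectSum.lieAlgebraComponent K (Fin (n ℓ)) (fun _ => s ℓ) j).comp
      ((DirectSum.lieAlgebraComponent K (Fin m) (fun ℓ' => ⨁ _j : Fin (n ℓ'), s ℓ') ℓ).comp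
        h.incl)
  have χ_apply : ∀ (ℓ : Fin m) (j : Fin (n ℓ)) (X : ↥h),
      χ ℓ j X = (X : ⨁ ℓ', (⨁ _j : Fin (n ℓ'), s ℓ')) ℓ j := fun _ _ _ => rfl
  have χ_surj : ∀ (ℓ : Fin m) (j : Fin (n ℓ)), Function.Surjective (χ ℓ j) := by
    intro ℓ j t
    obtain ⟨X, hX, hXl⟩ := hsurj ℓ (DirectSum.of _ j t)
    exact ⟨⟨X, hX⟩, by rw [χ_apply]; simp only [hXl, DirectSum.of_eq_same]⟩
  -- Goursat-type induction: we can kill any finite set of coordinates away from `ℓ₀`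
  have key : ∀ (ℓ₀ : Fin m) (j₀ : Fin (n ℓ₀)) (F : Finset ((ℓ : Fin m) × Fin (n ℓ))),
      (∀ q ∈ F, q.1 ≠ ℓ₀) → ∀ t : s (ℓ₀),
      ∃ X ∈ h, (∀ q ∈ F, X q.1 q.2 = 0) ∧ X ℓ₀ j₀ = t := by
    intro ℓ₀ j₀ F
    induction F using Finset.induction_on with
    | empty =>
      intro _ t
      obtain ⟨X, hX, hXl⟩ := hsurj ℓ₀ (DirectSum.of _ j₀ t)
      exact ⟨X, hX, fun q hq => absurd hq (Finset.notMem_empty q),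
        by rw [hXl, DirectSum.of_eq_same]⟩
    | @insert q F hqF IH =>
      intro hne t
      have hq1 : q.1 ≠ ℓ₀ := hne q (Finset.mem_insert_self q F)
      have hF : ∀ q' ∈ F, q'.1 ≠ ℓ₀ := fun q' hq' => hne q' (Finset.mem_insert_of_mem hq')
      -- the ideal of `h` of elements vanishing on coordinates in `F`
      let A : LieIdeal K ↥h :=
        { carrier := {X : ↥h | ∀ q' ∈ F, (X : ⨁ ℓ', (⨁ _j : Fin (n ℓ'), s ℓ')) q'.1 q'.2 = 0}
          add_mem' := fun {X Y} hX hY q' hq' => by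
            show (((X : ⨁ ℓ', (⨁ _j : Fin (n ℓ'), s ℓ')) + (Y : ⨁ ℓ', (⨁ _j : Fin (n ℓ'), s ℓ'))) q'.1) q'.2 = 0
            rw [DirectSum.add_apply, DirectSum.add_apply, hX q' hq', hY q' hq', add_zero]
          zero_mem' := fun q' hq' => by simp
          smul_mem' := fun c X hX q' hq' => by
            show ((c • (X : ⨁ ℓ', (⨁ _j : Fin (n ℓ'), s ℓ'))) q'.1) q'.2 = 0
            rw [DirectSum.smul_apply, DirectSum.smul_apply, hX q' hq', smul_zero]
          lie_mem := fun {x X} hX q' hq' => by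
            show ((⁅(x : ⨁ ℓ', (⨁ _j : Fin (n ℓ'), s ℓ')), (X : ⨁ ℓ', (⨁ _j : Fin (n ℓ'), s ℓ'))⁆ : _) q'.1) q'.2 = 0
            rw [DirectSum.bracket_apply, DirectSum.bracket_apply, hX q' hq', lie_zero] }
      have hmemA : ∀ X : ↥h, X ∈ A ↔
          ∀ q' ∈ F, (X : ⨁ ℓ', (⨁ _j : Fin (n ℓ'), s ℓ')) q'.1 q'.2 = 0 := fun _ => Iff.rfl
      have hfA : ∀ t : s ℓ₀, ∃ a ∈ A, χ ℓ₀ j₀ a = t := by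
        intro t
        obtain ⟨X, hX, hXF, hXt⟩ := IH hF t
        exact ⟨⟨X, hX⟩, (hmemA _).mpr hXF, hXt⟩
      obtain ⟨x, hxA, hxt, hx0⟩ := aux_step (χ ℓ₀ j₀) (χ q.1 q.2) (χ_surj ℓ₀ j₀)
        (χ_surj q.1 q.2) A hfA (hdistinct q.1 ℓ₀ hq1) t
      refine ⟨↑x, x.2, ?_, hxt⟩
      intro q' hq'
      rcases Finset.mem_insert.mp hq' with rfl | hq'
      · exact hx0
      · exact (hmemA x).mp hxA q' hq'
  -- the main bracket computation
  have hcalc : ∀ (ℓ₀ : Fin m) (j₀ : Fin (n ℓ₀)) (a : s ℓ₀)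
      (V X : ⨁ ℓ', (⨁ _j : Fin (n ℓ'), s ℓ')),
      V ℓ₀ = DirectSum.of _ j₀ a → (∀ ℓ, ℓ ≠ ℓ₀ → ∀ j, X ℓ j = 0) →
      ⁅V, X⁆ = DirectSum.of _ ℓ₀ (DirectSum.of _ j₀ ⁅a, X ℓ₀ j₀⁆) := by
    intro ℓ₀ j₀ a V X hV hX
    refine DFinsupp.ext fun ℓ => ?_
    rcases eq_or_ne ℓ ℓ₀ with rfl | hℓ
    · rw [DirectSum.bracket_apply, hV, DirectSum.of_eq_same]
      refine DFinsupp.ext fun j => ?_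
      rcases eq_or_ne j j₀ with rfl | hj
      · rw [DirectSum.bracket_apply, DirectSum.of_eq_same, DirectSum.of_eq_same]
      · rw [DirectSum.bracket_apply, DirectSum.of_eq_of_ne _ _ _ hj,
          DirectSum.of_eq_of_ne _ _ _ hj, zero_lie]
    · rw [DirectSum.of_eq_of_ne _ _ _ hℓ]
      refine DFinsupp.ext fun j => ?_
      rw [DirectSum.bracket_apply, DirectSum.bracket_apply, hX ℓ hℓ j, lie_zero,
        DirectSum.zero_apply]
  -- every single-coordinate element lies in `h`
  have hofof : ∀ (ℓ₀ : Fin m) (j₀ : Fin (n ℓ₀)) (t : s ℓ₀),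
      DirectSum.of _ ℓ₀ (DirectSum.of _ j₀ t) ∈ h := by
    intro ℓ₀ j₀
    -- first, all brackets
    have hbr : ∀ a b : s ℓ₀,
        DirectSum.of _ ℓ₀ (DirectSum.of _ j₀ ⁅a, b⁆) ∈ h := by
      intro a b
      obtain ⟨X, hXh, hXF, hXt⟩ := key ℓ₀ j₀
        (Finset.univ.filter (fun q : (ℓ : Fin m) × Fin (n ℓ) => q.1 ≠ ℓ₀))
        (fun q hq => (Finset.mem_filter.mp hq).2) b
      obtain ⟨V, hVh, hVl⟩ := hsurj ℓ₀ (DirectSum.of _ j₀ a)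
      have hX0 : ∀ ℓ, ℓ ≠ ℓ₀ → ∀ j, X ℓ j = 0 := by
        intro ℓ hℓ j
        exact hXF ⟨ℓ, j⟩ (Finset.mem_filter.mpr ⟨Finset.mem_univ _, hℓ⟩)
      have := hcalc ℓ₀ j₀ a V X hVl hX0
      rw [hXt] at this
      exact this ▸ h.lie_mem hVh hXh
    rcases simple_set_dichotomy (K := K)
      {t : s ℓ₀ | DirectSum.of _ ℓ₀ (DirectSum.of _ j₀ t) ∈ h}
      (by simp [h.zero_mem])
      (fun x hx y hy => by
        simp only [Set.mem_setOf_eq, map_add] at *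
        exact h.add_mem hx hy)
      (fun c x hx => by
        simp only [Set.mem_setOf_eq] at *
        have : DirectSum.of (fun ℓ' => ⨁ _j : Fin (n ℓ'), s ℓ') ℓ₀
            (DirectSum.of (fun _j : Fin (n ℓ₀) => s ℓ₀) j₀ (c • x))
            = c • DirectSum.of (fun ℓ' => ⨁ _j : Fin (n ℓ'), s ℓ') ℓ₀
            (DirectSum.of (fun _j : Fin (n ℓ₀) => s ℓ₀) j₀ x) := by
          simp only [← DirectSum.lof_eq_of K, LinearMap.map_smul]
        rw [this]
        exact h.smul_mem c hx)
      (fun x t ht => by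
        simp only [Set.mem_setOf_eq] at *
        obtain ⟨V, hVh, hVl⟩ := hsurj ℓ₀ (DirectSum.of _ j₀ x)
        have h0 : ∀ ℓ, ℓ ≠ ℓ₀ → ∀ j,
            (DirectSum.of (fun ℓ' => ⨁ _j : Fin (n ℓ'), s ℓ') ℓ₀
              (DirectSum.of (fun _j : Fin (n ℓ₀) => s ℓ₀) j₀ t)) ℓ j = 0 := by
          intro ℓ hℓ j
          rw [DirectSum.of_eq_of_ne _ _ _ hℓ, DirectSum.zero_apply]
        have := hcalc ℓ₀ j₀ x V _ hVl h0
        rw [DirectSum.of_eq_same, DirectSum.of_eq_same] at this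
        exact this ▸ h.lie_mem hVh ht) with hbot | htop
    · exfalso
      obtain ⟨a, b, hab⟩ := simple_exists_lie_ne_zero (K := K) (s ℓ₀)
      exact hab (hbot _ (hbr a b))
    · exact htop
  -- assemble
  have hall : ∀ (ℓ : Fin m) (y : ⨁ _j : Fin (n ℓ), s ℓ),
      DirectSum.of _ ℓ y ∈ h := by
    intro ℓ y
    rw [← DirectSum.sum_support_of y, map_sum]
    exact sum_mem fun j _ => hofof ℓ j (y j)
  rw [eq_top_iff]
  intro x _
  rw [← DirectSum.sum_support_of x]
  exact sum_mem fun ℓ _ => hall ℓ (x ℓ)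
end
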